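/- arXiv:1210.0487 — 2 statements merged into one kernel-verified Lean document; each statement's English description precedes it below -/
import Mathlib

section
/- Define, for ζ ∈ (0,1), H(ζ) := 2·(ζ²/√(1−ζ²))·∫_ζ^1 √(t^{−2} − 1) dt, and let ζ₀ ∈ (0, √(2−√2)) be the unique zero of g₀(ζ) := ∫_ζ^1 √(t^{−2} − 1) dt − (1−ζ²)^{3/2}/(2−ζ²) in that interval. Then H is strictly increasing on (0, ζ₀) and strictly decreasing on (ζ₀, 1); in particular ζ₀ is the unique global maximizer of H on (0,1). -/
/-- The leading-order criticality function
`g₀(ζ) = ∫_ζ^1 √(t^{−2}−1) dt − (1−ζ²)^{3/2}/(2−ζ²)`. -/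
noncomputable def g0 (ζ : ℝ) : ℝ :=
  (∫ t in ζ..(1 : ℝ), Real.sqrt (1 / t ^ 2 - 1)) - (1 - ζ ^ 2) ^ ((3 : ℝ) / 2) / (2 - ζ ^ 2)

/-- The leading-order exponential rate `H(ζ) = 2 (ζ²/√(1−ζ²)) ∫_ζ^1 √(t^{−2}−1) dt`. -/
noncomputable def Hrate (ζ : ℝ) : ℝ :=
  2 * (ζ ^ 2 / Real.sqrt (1 - ζ ^ 2)) * ∫ t in ζ..(1 : ℝ), Real.sqrt (1 / t ^ 2 - 1)

open Real Set

noncomputable def Iint (x : ℝ) : ℝ := ∫ t in x..(1:ℝ), Real.sqrt (1 / t ^ 2 - 1)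

lemma integrand_contOn : ContinuousOn (fun t : ℝ => Real.sqrt (1 / t ^ 2 - 1)) {t | t ≠ 0} := by
  apply Real.continuous_sqrt.comp_continuousOn
  exact (continuousOn_const.div (by fun_prop) (fun t ht => pow_ne_zero 2 ht)).sub continuousOn_const

lemma integrand_meas : Measurable (fun t : ℝ => Real.sqrt (1 / t ^ 2 - 1)) := by
  fun_prop

lemma hasDerivAt_Iint {x : ℝ} (hx : 0 < x) :
    HasDerivAt Iint (-Real.sqrt (1 / x ^ 2 - 1)) x := by
  apply intervalIntegral.integral_hasDerivAt_left
  · apply ContinuousOn.intervalIntegrable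
    apply integrand_contOn.mono
    intro t ht
    rcases Set.mem_uIcc.1 ht with h | h
    · simp only [Set.mem_setOf_eq]; nlinarith [h.1]
    · simp only [Set.mem_setOf_eq]; nlinarith [h.1]
  · exact integrand_meas.aestronglyMeasurable.stronglyMeasurableAtFilter
  · exact integrand_contOn.continuousAt (IsOpen.mem_nhds isOpen_compl_singleton hx.ne')

lemma sqrt_inv_sub {x : ℝ} (hx : 0 < x) (hx1 : x < 1) :
    Real.sqrt (1 / x ^ 2 - 1) = Real.sqrt (1 - x ^ 2) / x := by
  rw [show 1 / x ^ 2 - 1 = (1 - x ^ 2) / x ^ 2 by field_simp]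
  rw [Real.sqrt_div (by nlinarith) , Real.sqrt_sq hx.le]

lemma rpow_three_halves {a : ℝ} (ha : 0 ≤ a) : a ^ ((3:ℝ)/2) = Real.sqrt a ^ 3 := by
  rw [Real.sqrt_eq_rpow, ← Real.rpow_natCast (a ^ (1/(2:ℝ))) 3, ← Real.rpow_mul ha]
  norm_num

lemma alg1 (s x I : ℝ) (hs : 0 < s) (hx : 0 < x) (hs2 : s^2 = 1 - x^2)
    (h2 : (2:ℝ) - x^2 ≠ 0) :
    2*((2*x*s - x^2*(-x/s))/s^2) * I + (2*(x^2/s)) * (-(s/x))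
      = 2*(x*(2-x^2)/s^3) * (I - s^3/(2-x^2)) := by
  have h3 : s^3 = (1-x^2)*s := by rw [pow_succ, hs2]
  have h4 : s^4 = (1-x^2)^2 := by rw [show (4:ℕ)=2*2 from rfl, pow_mul, hs2]
  have h6 : s^6 = (1-x^2)^3 := by rw [show (6:ℕ)=2*3 from rfl, pow_mul, hs2]
  have h7 : s^7 = (1-x^2)^3*s := by rw [pow_succ, h6]
  field_simp
  ring_nf
  rw [hs2]
  ring

lemma alg2 (s x : ℝ) (hx : 0 < x) (hs2 : s^2 = 1 - x^2)
    (h2 : (2:ℝ) - x^2 ≠ 0) :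
    -(s/x) - ((((3:ℝ)/2) * s * (-(2*x)))*(2-x^2) - s^3*(-(2*x)))/((2-x^2)^2)
      = -2*s*(x^4-4*x^2+2)/(x*(2-x^2)^2) := by
  have h3 : s^3 = (1-x^2)*s := by rw [pow_succ, hs2]
  field_simp
  ring_nf
  rw [h3]
  ring

lemma hasDerivAt_sqrt_one_sub {x : ℝ} (hx1 : x < 1) (hx0 : -1 < x) :
    HasDerivAt (fun z : ℝ => Real.sqrt (1 - z ^ 2)) (-x / Real.sqrt (1 - x ^ 2)) x := by
  have h1 : HasDerivAt (fun z : ℝ => 1 - z ^ 2) (-(2*x)) x := by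
    simpa using ((hasDerivAt_pow 2 x).const_sub 1)
  have := (Real.hasDerivAt_sqrt (by nlinarith : 1 - x ^ 2 ≠ 0)).comp x h1
  refine this.congr_deriv (Eq.symm ?_)
  field_simp

lemma hasDerivAt_Hrate {x : ℝ} (hx : 0 < x) (hx1 : x < 1) :
    HasDerivAt Hrate
      (2 * (x*(2-x^2) / (Real.sqrt (1 - x^2))^3) * g0 x) x := by
  set s := Real.sqrt (1 - x^2) with hs_def
  have hpos : (0:ℝ) < 1 - x^2 := by nlinarith
  have hs : 0 < s := Real.sqrt_pos.2 hpos
  have hs2 : s^2 = 1 - x^2 := Real.sq_sqrt hpos.le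
  have h2 : (2:ℝ) - x^2 ≠ 0 := by nlinarith
  have hsq : HasDerivAt (fun z : ℝ => Real.sqrt (1 - z ^ 2)) (-x / s) x :=
    hasDerivAt_sqrt_one_sub hx1 (by linarith)
  have hphi : HasDerivAt (fun z : ℝ => z ^ 2 / Real.sqrt (1 - z ^ 2))
      ((2*x*s - x^2*(-x/s))/s^2) x := by
    refine ((hasDerivAt_pow 2 x).div hsq hs.ne').congr_deriv (Eq.symm ?_)
    norm_num [hs_def]
  have hI : HasDerivAt Iint (-(s/x)) x := by
    have := hasDerivAt_Iint hx
    rwa [sqrt_inv_sub hx hx1, ← hs_def] at this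
  have hH := (hphi.const_mul 2).mul hI
  have hfun : Hrate = fun z => (2 * (z ^ 2 / Real.sqrt (1 - z ^ 2))) * Iint z := rfl
  rw [hfun]
  have hg0 : g0 x = Iint x - s^3/(2-x^2) := by
    unfold g0 Iint
    rw [rpow_three_halves hpos.le]
  rw [show 2 * (x*(2-x^2) / s^3) * g0 x
      = 2*((2*x*s - x^2*(-x/s))/s^2) * Iint x + (2*(x^2/s)) * (-(s/x)) by
    rw [hg0, alg1 s x (Iint x) hs hx hs2 h2]]
  exact hH

lemma hasDerivAt_g0 {x : ℝ} (hx : 0 < x) (hx1 : x < 1) :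
    HasDerivAt g0
      (-2*Real.sqrt (1-x^2)*(x^4-4*x^2+2)/(x*(2-x^2)^2)) x := by
  set s := Real.sqrt (1 - x^2) with hs_def
  have hpos : (0:ℝ) < 1 - x^2 := by nlinarith
  have hs : 0 < s := Real.sqrt_pos.2 hpos
  have hs2 : s^2 = 1 - x^2 := Real.sq_sqrt hpos.le
  have h2 : (2:ℝ) - x^2 ≠ 0 := by nlinarith
  have hbase : HasDerivAt (fun z : ℝ => 1 - z ^ 2) (-(2*x)) x := by
    simpa using ((hasDerivAt_pow 2 x).const_sub 1)
  have hu : HasDerivAt (fun z : ℝ => (1 - z ^ 2) ^ ((3:ℝ)/2))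
      (((3:ℝ)/2) * s * (-(2*x))) x := by
    have h := (Real.hasDerivAt_rpow_const (x := 1 - x ^ 2) (p := (3:ℝ)/2)
      (Or.inr (by norm_num))).comp x hbase
    refine h.congr_deriv (Eq.symm ?_)
    rw [show (3:ℝ)/2 - 1 = 1/2 by norm_num, hs_def, Real.sqrt_eq_rpow]
  have hv : HasDerivAt (fun z : ℝ => 2 - z ^ 2) (-(2*x)) x := by
    simpa using ((hasDerivAt_pow 2 x).const_sub 2)
  have hr := hu.div hv h2
  have hI : HasDerivAt Iint (-(s/x)) x := by
    have := hasDerivAt_Iint hx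
    rwa [sqrt_inv_sub hx hx1, ← hs_def] at this
  have hfun : g0 = fun z => Iint z - (1 - z ^ 2) ^ ((3:ℝ)/2) / (2 - z ^ 2) := rfl
  rw [hfun]
  have := hI.sub hr
  refine this.congr_deriv (Eq.symm ?_)
  rw [rpow_three_halves hpos.le, ← hs_def]
  linear_combination (alg2 s x hx hs2 h2).symm

lemma sqrt2_lt_two : Real.sqrt 2 < 2 := by
  nlinarith [Real.sq_sqrt (show (0:ℝ) ≤ 2 by norm_num), Real.sqrt_nonneg 2]

lemma one_lt_sqrt2 : 1 < Real.sqrt 2 := by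
  nlinarith [Real.sq_sqrt (show (0:ℝ) ≤ 2 by norm_num), Real.sqrt_nonneg 2]

lemma z1_pos : 0 < Real.sqrt (2 - Real.sqrt 2) :=
  Real.sqrt_pos.2 (by linarith [sqrt2_lt_two])

lemma z1_lt_one : Real.sqrt (2 - Real.sqrt 2) < 1 := by
  have h := one_lt_sqrt2
  rw [show (1:ℝ) = Real.sqrt 1 by simp]
  exact Real.sqrt_lt_sqrt (by linarith [sqrt2_lt_two]) (by linarith)

lemma z1_sq : (Real.sqrt (2 - Real.sqrt 2))^2 = 2 - Real.sqrt 2 :=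
  Real.sq_sqrt (by linarith [sqrt2_lt_two])

lemma quartic_factor (x : ℝ) :
    x^4 - 4*x^2 + 2 = ((2 - Real.sqrt 2) - x^2) * ((2 + Real.sqrt 2) - x^2) := by
  have h2 : Real.sqrt 2 ^ 2 = 2 := Real.sq_sqrt (by norm_num)
  linear_combination h2

lemma g0_one : g0 1 = 0 := by
  unfold g0
  rw [intervalIntegral.integral_same]
  norm_num

lemma deriv_g0_neg {x : ℝ} (hx : 0 < x) (hxz : x < Real.sqrt (2 - Real.sqrt 2)) :
    deriv g0 x < 0 := by
  have hx1 : x < 1 := hxz.trans z1_lt_one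
  rw [(hasDerivAt_g0 hx hx1).deriv]
  have hxsq : x^2 < 2 - Real.sqrt 2 := by
    have := Real.sqrt_lt_sqrt (sq_nonneg x) (by nlinarith [z1_sq] : x^2 < (Real.sqrt (2 - Real.sqrt 2))^2)
    nlinarith [z1_sq]
  have hq : 0 < x^4 - 4*x^2 + 2 := by
    rw [quartic_factor]
    have h1 : 0 < (2 - Real.sqrt 2) - x^2 := by linarith
    have h2 : 0 < (2 + Real.sqrt 2) - x^2 := by nlinarith [Real.sqrt_nonneg 2]
    positivity
  have hs : 0 < Real.sqrt (1 - x^2) := Real.sqrt_pos.2 (by nlinarith)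
  apply div_neg_of_neg_of_pos
  · nlinarith
  · have : (0:ℝ) < 2 - x^2 := by nlinarith
    positivity

lemma deriv_g0_pos {x : ℝ} (hxz : Real.sqrt (2 - Real.sqrt 2) < x) (hx1 : x < 1) :
    0 < deriv g0 x := by
  have hx : 0 < x := z1_pos.trans hxz
  rw [(hasDerivAt_g0 hx hx1).deriv]
  have hxsq : 2 - Real.sqrt 2 < x^2 := by nlinarith [z1_sq, z1_pos]
  have hq : x^4 - 4*x^2 + 2 < 0 := by
    rw [quartic_factor]
    have h1 : (2 - Real.sqrt 2) - x^2 < 0 := by linarith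
    have h2 : 0 < (2 + Real.sqrt 2) - x^2 := by nlinarith [one_lt_sqrt2]
    nlinarith
  have hs : 0 < Real.sqrt (1 - x^2) := Real.sqrt_pos.2 (by nlinarith)
  apply div_pos
  · nlinarith
  · have : (0:ℝ) < 2 - x^2 := by nlinarith
    positivity

lemma g0_continuousAt_one : ContinuousAt g0 1 := by
  have h1 : ContinuousAt Iint 1 := (hasDerivAt_Iint one_pos).continuousAt
  have h2 : ContinuousAt (fun z : ℝ => (1 - z ^ 2) ^ ((3:ℝ)/2) / (2 - z ^ 2)) 1 := by
    apply ContinuousAt.div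
    · exact (Real.continuousAt_rpow_const _ _ (Or.inr (by norm_num))).comp (by fun_prop)
    · fun_prop
    · norm_num
  exact h1.sub h2

lemma g0_strictAntiOn :
    StrictAntiOn g0 (Set.Ioc 0 (Real.sqrt (2 - Real.sqrt 2))) := by
  apply strictAntiOn_of_deriv_neg (convex_Ioc _ _)
  · intro x hx
    have hx1 : x < 1 := hx.2.trans_lt z1_lt_one
    exact (hasDerivAt_g0 hx.1 hx1).continuousAt.continuousWithinAt
  · rw [interior_Ioc]
    intro x hx
    exact deriv_g0_neg hx.1 hx.2

lemma g0_strictMonoOn :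
    StrictMonoOn g0 (Set.Icc (Real.sqrt (2 - Real.sqrt 2)) 1) := by
  apply strictMonoOn_of_deriv_pos (convex_Icc _ _)
  · intro x hx
    rcases eq_or_lt_of_le hx.2 with h | h
    · rw [h]; exact g0_continuousAt_one.continuousWithinAt
    · exact (hasDerivAt_g0 (z1_pos.trans_le hx.1) h).continuousAt.continuousWithinAt
  · rw [interior_Icc]
    intro x hx
    exact deriv_g0_pos hx.1 hx.2

/-- If `ζ₀` is the unique zero of `g₀` in `(0, √(2−√2))`, then `H` is strictly
increasing on `(0, ζ₀)` and strictly decreasing on `(ζ₀, 1)`; in particular `ζ₀` is the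
unique global maximizer of `H` on `(0,1)`. -/
theorem stmt12 :
    ∀ ζ₀ ∈ Set.Ioo (0 : ℝ) (Real.sqrt (2 - Real.sqrt 2)), g0 ζ₀ = 0 →
      StrictMonoOn Hrate (Set.Ioo (0 : ℝ) ζ₀)
        ∧ StrictAntiOn Hrate (Set.Ioo ζ₀ (1 : ℝ))
        ∧ ∀ ζ ∈ Set.Ioo (0 : ℝ) 1, ζ ≠ ζ₀ → Hrate ζ < Hrate ζ₀ := by
  intro ζ₀ hζ₀ hg
  obtain ⟨h0, hz1⟩ := hζ₀
  have hζ₀1 : ζ₀ < 1 := hz1.trans z1_lt_one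
  -- sign of g0
  have g0_pos : ∀ ζ ∈ Set.Ioo (0:ℝ) ζ₀, 0 < g0 ζ := by
    intro ζ hζ
    have := g0_strictAntiOn ⟨hζ.1, (hζ.2.le.trans hz1.le)⟩ ⟨h0, hz1.le⟩ hζ.2
    rwa [hg] at this
  have g0_neg : ∀ ζ ∈ Set.Ioo ζ₀ (1:ℝ), g0 ζ < 0 := by
    intro ζ hζ
    rcases le_or_gt ζ (Real.sqrt (2 - Real.sqrt 2)) with h | h
    · have := g0_strictAntiOn ⟨h0, hz1.le⟩ ⟨h0.trans hζ.1, h⟩ hζ.1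
      rwa [hg] at this
    · have := g0_strictMonoOn ⟨h.le, hζ.2.le⟩ ⟨(z1_lt_one).le.trans (le_refl 1), le_refl 1⟩ hζ.2
      rwa [g0_one] at this
  -- derivative sign of Hrate
  have derivH : ∀ x, 0 < x → x < 1 →
      deriv Hrate x = 2 * (x*(2-x^2) / (Real.sqrt (1 - x^2))^3) * g0 x :=
    fun x hx hx1 => (hasDerivAt_Hrate hx hx1).deriv
  have coef_pos : ∀ x, 0 < x → x < 1 →
      0 < 2 * (x*(2-x^2) / (Real.sqrt (1 - x^2))^3) := by
    intro x hx hx1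
    have hs : 0 < Real.sqrt (1 - x^2) := Real.sqrt_pos.2 (by nlinarith)
    have h2 : (0:ℝ) < 2 - x^2 := by nlinarith
    positivity
  have hmonoH : StrictMonoOn Hrate (Set.Ioc 0 ζ₀) := by
    apply strictMonoOn_of_deriv_pos (convex_Ioc _ _)
    · intro x hx
      exact (hasDerivAt_Hrate hx.1 (hx.2.trans_lt hζ₀1)).continuousAt.continuousWithinAt
    · rw [interior_Ioc]
      intro x hx
      have hx1 : x < 1 := hx.2.trans hζ₀1
      rw [derivH x hx.1 hx1]
      exact mul_pos (coef_pos x hx.1 hx1) (g0_pos x hx)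
  have hantiH : StrictAntiOn Hrate (Set.Ico ζ₀ 1) := by
    apply strictAntiOn_of_deriv_neg (convex_Ico _ _)
    · intro x hx
      exact (hasDerivAt_Hrate (h0.trans_le hx.1) hx.2).continuousAt.continuousWithinAt
    · rw [interior_Ico]
      intro x hx
      have hx0 : 0 < x := h0.trans hx.1
      rw [derivH x hx0 hx.2]
      exact mul_neg_of_pos_of_neg (coef_pos x hx0 hx.2) (g0_neg x hx)
  refine ⟨hmonoH.mono Set.Ioo_subset_Ioc_self, hantiH.mono Set.Ioo_subset_Ico_self, ?_⟩
  intro ζ hζ hne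
  rcases lt_or_gt_of_ne hne with h | h
  · exact hmonoH ⟨hζ.1, h.le⟩ ⟨h0, le_refl _⟩ h
  · exact hantiH ⟨le_refl _, hζ₀1⟩ ⟨h.le, hζ.2⟩ h
end

section
/- Let ζ₀ ∈ (0, √(2−√2)) be the unique zero of g₀(ζ) := ∫_ζ^1 √(t^{−2} − 1) dt − (1−ζ²)^{3/2}/(2−ζ²) in that interval, and define l₀ := ζ₀²/√(1−ζ₀²). Then 0.415 < l₀ < 0.416. -/
open Real Set

/-- Closed form of `g0` on `(0,1)`. -/
noncomputable def Gf (ζ : ℝ) : ℝ :=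
  Real.log (1 + Real.sqrt (1 - ζ^2)) - Real.log ζ - Real.sqrt (1 - ζ^2)
    - Real.sqrt (1 - ζ^2) ^ 3 / (2 - ζ^2)

lemma sqrt2_gt : (1.41:ℝ) < Real.sqrt 2 := by
  rw [show (1.41:ℝ) = Real.sqrt (1.41^2) by rw [Real.sqrt_sq] <;> norm_num]
  exact Real.sqrt_lt_sqrt (by norm_num) (by norm_num)

lemma sqrt2_lt : Real.sqrt 2 < 1.42 := by
  rw [Real.sqrt_lt' (by norm_num)]; norm_num

lemma Gf_deriv_neg {x : ℝ} (hx0 : 0 < x) (hxs : x^2 < 2 - Real.sqrt 2) :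
    HasDerivAt Gf
      ((-(2*x)/(2*Real.sqrt (1-x^2)))/(1+Real.sqrt (1-x^2)) - x⁻¹ - (-(2*x)/(2*Real.sqrt (1-x^2)))
        - ((3*Real.sqrt (1-x^2)^2*(-(2*x)/(2*Real.sqrt (1-x^2))))*(2-x^2)
            - Real.sqrt (1-x^2)^3*(-(2*x)))/(2-x^2)^2) x ∧
      ((-(2*x)/(2*Real.sqrt (1-x^2)))/(1+Real.sqrt (1-x^2)) - x⁻¹ - (-(2*x)/(2*Real.sqrt (1-x^2)))
        - ((3*Real.sqrt (1-x^2)^2*(-(2*x)/(2*Real.sqrt (1-x^2))))*(2-x^2)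
            - Real.sqrt (1-x^2)^3*(-(2*x)))/(2-x^2)^2) < 0 := by
  have h2gt := sqrt2_gt
  have h2lt := sqrt2_lt
  have hu : 0 < 1 - x^2 := by nlinarith
  set S := Real.sqrt (1-x^2) with hSdef
  have hS : 0 < S := Real.sqrt_pos.mpr hu
  have hs2 : S^2 = 1 - x^2 := Real.sq_sqrt hu.le
  have h1S : 0 < 1 + S := by linarith
  have hQ : 0 < 2 - x^2 := by nlinarith
  constructor
  · have h1d : HasDerivAt (fun t : ℝ => 1 - t^2) (-(2*x)) x := by
      simpa using (hasDerivAt_pow 2 x).const_sub 1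
    have h2d : HasDerivAt (fun t : ℝ => 2 - t^2) (-(2*x)) x := by
      simpa using (hasDerivAt_pow 2 x).const_sub 2
    have hSd : HasDerivAt (fun t : ℝ => Real.sqrt (1 - t^2)) (-(2*x)/(2*S)) x :=
      h1d.sqrt hu.ne'
    have hL1 : HasDerivAt (fun t : ℝ => Real.log (1 + Real.sqrt (1 - t^2)))
        ((-(2*x)/(2*S))/(1+S)) x := by
      have := (hSd.const_add 1).log (by positivity)
      simpa using this
    have hL2 : HasDerivAt Real.log x⁻¹ x := Real.hasDerivAt_log hx0.ne'
    have hT : HasDerivAt (fun t : ℝ => Real.sqrt (1 - t^2) ^ 3 / (2 - t^2))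
        (((3*S^2*(-(2*x)/(2*S)))*(2-x^2) - S^3*(-(2*x)))/(2-x^2)^2) x := by
      have hp := hSd.pow 3
      have := HasDerivAt.fun_div (c := fun t : ℝ => Real.sqrt (1 - t^2) ^ 3) hp h2d hQ.ne'
      refine this.congr_deriv ?_
      norm_num [hSdef]
    exact ((hL1.sub hL2).sub hSd).sub hT
  · set D := ((-(2*x)/(2*S))/(1+S) - x⁻¹ - (-(2*x)/(2*S))
        - ((3*S^2*(-(2*x)/(2*S)))*(2-x^2) - S^3*(-(2*x)))/(2-x^2)^2) with hDdef
    have hM : (0:ℝ) < x*S*(1+S)*(2-x^2)^2 := by positivity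
    have key : D * (x*S*(1+S)*(2-x^2)^2)
        = S*(x^2*(2-x^2)^2 - (1+S)*(2-x^2)^2 + x^2*S*(1+S)*(3*(2-x^2)-2*S^2)) := by
      rw [hDdef]
      field_simp
      ring
    have hz2 : x^2 = 1 - S^2 := by linarith
    have h1 : 0 < S^4 + 2*S^2 - 1 := by
      have hlb : Real.sqrt 2 - 1 < S^2 := by nlinarith
      have h2 : Real.sqrt 2 ^ 2 = 2 := Real.sq_sqrt (by norm_num)
      nlinarith [mul_self_lt_mul_self (Real.sqrt_nonneg 2) (by linarith : Real.sqrt 2 < S^2 + 1)]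
    have hP : S*(x^2*(2-x^2)^2 - (1+S)*(2-x^2)^2 + x^2*S*(1+S)*(3*(2-x^2)-2*S^2)) < 0 := by
      rw [hz2]
      nlinarith [mul_pos (mul_pos (mul_pos hS hS) h1S) h1]
    by_contra hD0
    push_neg at hD0
    nlinarith [mul_nonneg hD0 hM.le]

lemma g0_eq_Gf {ζ : ℝ} (h0 : 0 < ζ) (h1 : ζ < 1) : g0 ζ = Gf ζ := by
  have hrpow : (1 - ζ^2) ^ ((3:ℝ)/2) = Real.sqrt (1 - ζ^2) ^ 3 := by
    have hnn : (0:ℝ) ≤ 1 - ζ^2 := by nlinarith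
    rw [show ((3:ℝ)/2) = (1/2 : ℝ) * (3:ℕ) by push_cast; ring, Real.rpow_mul hnn,
      Real.rpow_natCast, ← Real.sqrt_eq_rpow]
  have hint : (∫ t in ζ..(1:ℝ), Real.sqrt (1 / t ^ 2 - 1))
      = Real.log (1 + Real.sqrt (1 - ζ^2)) - Real.log ζ - Real.sqrt (1 - ζ^2) := by
    set F : ℝ → ℝ := fun t => Real.sqrt (1 - t^2) - Real.log (1 + Real.sqrt (1 - t^2))
      + Real.log t with hF
    have hs : Continuous fun t : ℝ => Real.sqrt (1 - t^2) :=
      (continuous_const.sub (continuous_pow 2)).sqrt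
    have hcont : ContinuousOn F (Icc ζ 1) := by
      apply ContinuousOn.add
      · apply ContinuousOn.sub hs.continuousOn
        exact (continuous_const.add hs).continuousOn.log (fun t _ => (by positivity : (0:ℝ) < 1 + Real.sqrt (1 - t^2)).ne')
      · exact Real.continuousOn_log.mono (by
          intro t ht
          exact (lt_of_lt_of_le h0 ht.1).ne')
    have hderiv : ∀ t ∈ Ioo ζ 1, HasDerivWithinAt F (Real.sqrt (1 / t ^ 2 - 1)) (Ioi t) t := by
      intro t ht
      have ht0 : 0 < t := lt_trans h0 ht.1
      have hu : 0 < 1 - t^2 := by nlinarith [ht.2, ht0]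
      set S := Real.sqrt (1 - t^2) with hSdef
      have hS : 0 < S := Real.sqrt_pos.mpr hu
      have hs2 : S^2 = 1 - t^2 := Real.sq_sqrt hu.le
      have h1d : HasDerivAt (fun s : ℝ => 1 - s^2) (-(2*t)) t := by
        simpa using (hasDerivAt_pow 2 t).const_sub 1
      have hSd : HasDerivAt (fun s : ℝ => Real.sqrt (1 - s^2)) (-(2*t)/(2*S)) t :=
        h1d.sqrt hu.ne'
      have hL1 : HasDerivAt (fun s : ℝ => Real.log (1 + Real.sqrt (1 - s^2)))
          ((-(2*t)/(2*S))/(1+S)) t := by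
        have := (hSd.const_add 1).log (by positivity)
        simpa using this
      have hL2 : HasDerivAt Real.log t⁻¹ t := Real.hasDerivAt_log ht0.ne'
      have hDF : HasDerivAt F (-(2*t)/(2*S) - (-(2*t)/(2*S))/(1+S) + t⁻¹) t :=
        (hSd.sub hL1).add hL2
      have hval : -(2*t)/(2*S) - (-(2*t)/(2*S))/(1+S) + t⁻¹ = Real.sqrt (1 / t ^ 2 - 1) := by
        have hrhs : Real.sqrt (1 / t ^ 2 - 1) = S / t := by
          rw [show 1 / t^2 - 1 = (1 - t^2)/t^2 by field_simp,
            Real.sqrt_div hu.le, Real.sqrt_sq ht0.le]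
        rw [hrhs]
        have h1S : (0:ℝ) < 1 + S := by linarith
        field_simp
        linear_combination (-S) * hs2
      rw [← hval]
      exact hDF.hasDerivWithinAt
    have hint' : IntervalIntegrable (fun t => Real.sqrt (1 / t ^ 2 - 1))
        MeasureTheory.volume ζ 1 := by
      apply ContinuousOn.intervalIntegrable
      apply ContinuousOn.sqrt
      apply ContinuousOn.sub _ continuousOn_const
      apply ContinuousOn.div continuousOn_const (continuousOn_pow 2)
      intro t ht
      rw [uIcc_of_le h1.le] at ht
      have : 0 < t := lt_of_lt_of_le h0 ht.1
      positivity
    have := intervalIntegral.integral_eq_sub_of_hasDeriv_right_of_le h1.le hcont hderiv hint'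
    rw [this, hF]
    simp
    ring
  rw [g0, hint, hrpow, Gf]

lemma exp_upper : Real.exp 0.569 ≤ 1.7665 := by
  have h := Real.exp_bound' (x := (0.569:ℝ)) (by norm_num) (by norm_num) (n := 11) (by norm_num)
  refine h.trans ?_
  rw [show (11:ℕ) = 10 + 1 by norm_num]
  simp only [Finset.sum_range_succ, Finset.sum_range_zero]
  norm_num [Nat.factorial]

lemma exp_lower : (1.76596:ℝ) ≤ Real.exp 0.5687 := by
  have h := Real.sum_le_exp_of_nonneg (x := (0.5687:ℝ)) (by norm_num) 11
  refine le_trans ?_ h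
  rw [show (11:ℕ) = 10 + 1 by norm_num]
  simp only [Finset.sum_range_succ, Finset.sum_range_zero]
  norm_num [Nat.factorial]

lemma Gf_a_pos : 0 < Gf 0.5812 := by
  have hu : (1:ℝ) - (0.5812:ℝ)^2 = 0.66220656 := by norm_num
  have hS1 : (0.813760751:ℝ) < Real.sqrt (1 - (0.5812:ℝ)^2) := by
    rw [hu, Real.lt_sqrt (by norm_num)]; norm_num
  have hS2 : Real.sqrt (1 - (0.5812:ℝ)^2) < 0.8137607511 := by
    rw [hu, Real.sqrt_lt' (by norm_num)]; norm_num
  set S := Real.sqrt (1 - (0.5812:ℝ)^2) with hSdef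
  have hS0 : 0 < S := by linarith
  have hlog1 : Real.log (1.813760751) < Real.log (1 + S) :=
    Real.log_lt_log (by norm_num) (by linarith)
  have hlogy : (1.138:ℝ) < Real.log 1.813760751 - Real.log 0.5812 := by
    rw [← Real.log_div (by norm_num) (by norm_num),
      Real.lt_log_iff_exp_lt (by norm_num)]
    have e2 : Real.exp (1.138:ℝ) = Real.exp 0.569 * Real.exp 0.569 := by
      rw [← Real.exp_add]; norm_num
    have h1 := exp_upper
    have h0 := Real.exp_pos (0.569:ℝ)
    nlinarith
  have hden : (0:ℝ) < 2 - (0.5812:ℝ)^2 := by norm_num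
  have hq : S^3 / (2 - (0.5812:ℝ)^2) < (0.8137607511:ℝ)^3 / (2 - (0.5812:ℝ)^2) :=
    (div_lt_div_iff_of_pos_right hden).mpr (pow_lt_pow_left₀ hS2 hS0.le (by norm_num))
  have hnum : (0.8137607511:ℝ) + (0.8137607511:ℝ)^3/(2 - (0.5812:ℝ)^2) < 1.138 := by norm_num
  unfold Gf
  rw [← hSdef]
  linarith

lemma Gf_b_neg : Gf 0.5816 < 0 := by
  have hu : (1:ℝ) - (0.5816:ℝ)^2 = 0.66174144 := by norm_num
  have hS1 : (0.8134749166:ℝ) < Real.sqrt (1 - (0.5816:ℝ)^2) := by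
    rw [hu, Real.lt_sqrt (by norm_num)]; norm_num
  have hS2 : Real.sqrt (1 - (0.5816:ℝ)^2) < 0.8134749167 := by
    rw [hu, Real.sqrt_lt' (by norm_num)]; norm_num
  set S := Real.sqrt (1 - (0.5816:ℝ)^2) with hSdef
  have hS0 : 0 < S := by linarith
  have hlog1 : Real.log (1 + S) < Real.log (1.8134749167) :=
    Real.log_lt_log (by positivity) (by linarith)
  have hlogy : Real.log 1.8134749167 - Real.log 0.5816 < (1.1374:ℝ) := by
    rw [← Real.log_div (by norm_num) (by norm_num),
      Real.log_lt_iff_lt_exp (by norm_num)]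
    have e2 : Real.exp (1.1374:ℝ) = Real.exp 0.5687 * Real.exp 0.5687 := by
      rw [← Real.exp_add]; norm_num
    have h1 := exp_lower
    have h0 := Real.exp_pos (0.5687:ℝ)
    nlinarith
  have hden : (0:ℝ) < 2 - (0.5816:ℝ)^2 := by norm_num
  have hq : (0.8134749166:ℝ)^3 / (2 - (0.5816:ℝ)^2) < S^3 / (2 - (0.5816:ℝ)^2) :=
    (div_lt_div_iff_of_pos_right hden).mpr (pow_lt_pow_left₀ hS1 (by norm_num) (by norm_num))
  have hnum : (1.1374:ℝ) < (0.8134749166:ℝ) + (0.8134749166:ℝ)^3/(2 - (0.5816:ℝ)^2) := by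
    norm_num
  unfold Gf
  rw [← hSdef]
  linarith

lemma Gf_anti : StrictAntiOn Gf (Ioo (0:ℝ) (Real.sqrt (2 - Real.sqrt 2))) := by
  apply strictAntiOn_of_deriv_neg (convex_Ioo _ _)
  · have hs : Continuous fun t : ℝ => Real.sqrt (1 - t^2) :=
      (continuous_const.sub (continuous_pow 2)).sqrt
    apply ContinuousOn.sub
    apply ContinuousOn.sub
    apply ContinuousOn.sub
    · exact (continuous_const.add hs).continuousOn.log (fun t _ => (by positivity : (0:ℝ) < 1 + Real.sqrt (1 - t^2)).ne')
    · exact Real.continuousOn_log.mono (by intro t ht; exact ht.1.ne')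
    · exact hs.continuousOn
    · apply ContinuousOn.div (hs.pow 3).continuousOn
        (continuous_const.sub (continuous_pow 2)).continuousOn
      intro t ht
      have ht2 : t^2 < 2 - Real.sqrt 2 := by
        have := ht.2
        rw [Real.lt_sqrt ht.1.le] at this
        exact this
      have := sqrt2_gt
      show (2:ℝ) - t^2 ≠ 0
      nlinarith
  · intro x hx
    rw [interior_Ioo] at hx
    have hx2 : x^2 < 2 - Real.sqrt 2 := by
      have := hx.2
      rw [Real.lt_sqrt hx.1.le] at this
      exact this
    obtain ⟨hd, hneg⟩ := Gf_deriv_neg hx.1 hx2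
    rw [hd.deriv]
    exact hneg

/-- With `ζ₀` the unique zero of `g₀` in `(0, √(2−√2))` and `l₀ = ζ₀²/√(1−ζ₀²)`,
one has `0.415 < l₀ < 0.416`. -/
theorem stmt14 :
    ∀ ζ₀ ∈ Set.Ioo (0 : ℝ) (Real.sqrt (2 - Real.sqrt 2)), g0 ζ₀ = 0 →
      0.415 < ζ₀ ^ 2 / Real.sqrt (1 - ζ₀ ^ 2)
        ∧ ζ₀ ^ 2 / Real.sqrt (1 - ζ₀ ^ 2) < 0.416 := by
  intro ζ hζ hg
  obtain ⟨hζ0, hζc⟩ := hζ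
  have h2gt := sqrt2_gt
  have h2lt := sqrt2_lt
  have hc1 : Real.sqrt (2 - Real.sqrt 2) < 1 := by
    rw [Real.sqrt_lt' (by norm_num)]; nlinarith
  have hζ1 : ζ < 1 := lt_trans hζc hc1
  have hGζ : Gf ζ = 0 := by rw [← g0_eq_Gf hζ0 hζ1]; exact hg
  have ha_mem : (0.5812:ℝ) ∈ Ioo (0:ℝ) (Real.sqrt (2 - Real.sqrt 2)) := by
    constructor
    · norm_num
    · rw [Real.lt_sqrt (by norm_num)]; nlinarith
  have hb_mem : (0.5816:ℝ) ∈ Ioo (0:ℝ) (Real.sqrt (2 - Real.sqrt 2)) := by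
    constructor
    · norm_num
    · rw [Real.lt_sqrt (by norm_num)]; nlinarith
  have hζ_mem : ζ ∈ Ioo (0:ℝ) (Real.sqrt (2 - Real.sqrt 2)) := ⟨hζ0, hζc⟩
  have ha_lt : (0.5812:ℝ) < ζ := by
    by_contra h
    push_neg at h
    rcases lt_or_eq_of_le h with h' | h'
    · have := Gf_anti hζ_mem ha_mem h'
      rw [hGζ] at this
      exact absurd Gf_a_pos (by linarith)
    · rw [h'] at hGζ
      have h0 := Gf_a_pos
      rw [hGζ] at h0
      exact absurd h0 (by norm_num)
  have hb_gt : ζ < (0.5816:ℝ) := by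
    by_contra h
    push_neg at h
    rcases lt_or_eq_of_le h with h' | h'
    · have := Gf_anti hb_mem hζ_mem h'
      rw [hGζ] at this
      exact absurd Gf_b_neg (by linarith)
    · rw [← h'] at hGζ
      have h0 := Gf_b_neg
      rw [hGζ] at h0
      exact absurd h0 (by norm_num)
  have huζ : 0 < 1 - ζ^2 := by nlinarith
  have hsζ : 0 < Real.sqrt (1 - ζ^2) := Real.sqrt_pos.mpr huζ
  constructor
  · rw [lt_div_iff₀ hsζ]
    have h1 : Real.sqrt (1 - ζ^2) < Real.sqrt (1 - (0.5812:ℝ)^2) :=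
      Real.sqrt_lt_sqrt huζ.le (by nlinarith)
    have h2 : Real.sqrt (1 - (0.5812:ℝ)^2) < (0.5812:ℝ)^2 / 0.415 := by
      rw [Real.sqrt_lt' (by norm_num)]; norm_num
    nlinarith
  · rw [div_lt_iff₀ hsζ]
    have h1 : Real.sqrt (1 - (0.5816:ℝ)^2) < Real.sqrt (1 - ζ^2) :=
      Real.sqrt_lt_sqrt (by norm_num) (by nlinarith)
    have h2 : (0.5816:ℝ)^2 / 0.416 < Real.sqrt (1 - (0.5816:ℝ)^2) := by
      rw [Real.lt_sqrt (by norm_num)]; norm_num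
    nlinarith
end
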